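/- For each ε ∈ {ω, φ} and each c ∈ {1, −1}, the conjugacy class of ε^c in P satisfies Con(ε^c)_P = { y⁻¹ ε^c y : y ∈ W(D₄) }. -/

import Mathlib

/-- The multiplicative group structure that older Mathlib put on `AddAut A`
(composition as multiplication); current Mathlib makes `AddAut A` an additive group. -/
instance addAutMulGroup {A : Type*} [Add A] : Group (AddAut A) where
  mul g h := AddEquiv.trans h g
  one := AddEquiv.refl _
  inv := AddEquiv.symm
  mul_assoc _ _ _ := rfl
  one_mul _ := rfl
  mul_one _ := rfl
  inv_mul_cancel := AddEquiv.self_trans_symm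

section Infra
variable {L : Type*} [AddCommGroup L]

/-- The subgroup of fixed points of an automorphism of an abelian group. -/
def fixedPts (f : AddAut L) : AddSubgroup L where
  carrier := {x | f x = x}
  add_mem' := by
    intro a b ha hb
    simp only [Set.mem_setOf_eq, map_add] at *
    rw [ha, hb]
  zero_mem' := by simp
  neg_mem' := by
    intro a ha
    simp only [Set.mem_setOf_eq, map_neg] at *
    rw [ha]

/-- The isometry group of a `ℤ`-valued form: the group of all automorphisms of the
additive group preserving the form.  For a lattice `(L, B)` this is `Aut L`. -/
def IsometryGrp (B : L → L → ℤ) : Subgroup (AddAut L) where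
  carrier := {f | ∀ x y, B (f x) (f y) = B x y}
  one_mem' := by intro x y; rfl
  mul_mem' := by
    intro a b ha hb x y
    have h : ∀ z, (a * b) z = a (b z) := fun z => rfl
    simp only [Set.mem_setOf_eq] at *
    rw [h, h, ha, hb]
  inv_mem' := by
    intro a ha x y
    simp only [Set.mem_setOf_eq] at *
    have h := ha (a⁻¹ x) (a⁻¹ y)
    have h1 : a (a⁻¹ x) = x := a.apply_symm_apply x
    have h2 : a (a⁻¹ y) = y := a.apply_symm_apply y
    rw [h1, h2] at h
    exact h.symm

/-- The Weyl group of a lattice `(L, B)`: the subgroup generated by the reflections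
`r_α : x ↦ x − B(x,α)•α` in the norm-2 vectors `α`. -/
def WeylGrp (B : L → L → ℤ) : Subgroup (AddAut L) :=
  Subgroup.closure {w | ∃ α : L, B α α = 2 ∧ ∀ x, w x = x - B x α • α}

/-- The root lattice of `(L, B)`: the subgroup generated by the norm-2 vectors. -/
def rootLat (B : L → L → ℤ) : AddSubgroup L :=
  AddSubgroup.closure {α | B α α = 2}

/-- The rank of the fixed-point sublattice of an automorphism. -/
noncomputable def fixedRank (f : AddAut L) : ℕ :=
  Module.finrank ℤ ↥(fixedPts f)

end Infra

/-- An isomorphism of lattices: an isomorphism of the underlying abelian groups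
(equivalently, a `ℤ`-linear isomorphism) preserving the forms. -/
def FormIso {M N : Type*} [AddCommGroup M] [AddCommGroup N]
    (BM : M → M → ℤ) (BN : N → N → ℤ) : Prop :=
  ∃ e : M ≃+ N, ∀ x y, BN (e x) (e y) = BM x y

/-- The standard dot product on `ι → ℤ`. -/
def dotF {ι : Type*} [Fintype ι] (x y : ι → ℤ) : ℤ := ∑ i, x i * y i

/-- The root lattice `Aₙ ⊆ ℤ^{n+1}`. -/
def AnS (n : ℕ) : AddSubgroup (Fin (n + 1) → ℤ) where
  carrier := {x | ∑ i, x i = 0}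
  add_mem' := by
    intro a b ha hb
    simp only [Set.mem_setOf_eq, Pi.add_apply, Finset.sum_add_distrib] at *
    rw [ha, hb]; ring
  zero_mem' := by simp
  neg_mem' := by
    intro a ha
    simp only [Set.mem_setOf_eq, Pi.neg_apply, Finset.sum_neg_distrib] at *
    rw [ha]; ring

/-- The root lattice `Dₙ ⊆ ℤⁿ`. -/
def DnS (n : ℕ) : AddSubgroup (Fin n → ℤ) where
  carrier := {x | (2 : ℤ) ∣ ∑ i, x i}
  add_mem' := by
    intro a b ha hb
    simp only [Set.mem_setOf_eq, Pi.add_apply, Finset.sum_add_distrib] at *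
    exact dvd_add ha hb
  zero_mem' := by simp
  neg_mem' := by
    intro a ha
    simp only [Set.mem_setOf_eq, Pi.neg_apply, Finset.sum_neg_distrib] at *
    exact ha.neg_right

/-- The inner product on a root lattice, restricted from the ambient dot product. -/
def rootF {n : ℕ} (S : AddSubgroup (Fin n → ℤ)) (x y : ↥S) : ℤ := dotF x.val y.val


/-- The simple root `α₁ = (1,−1,0,0)` of `D₄`. -/
def d4a1 : ↥(DnS 4) := ⟨![1, -1, 0, 0], by show (2:ℤ) ∣ ∑ i, ![1,-1,0,0] i; decide⟩

/-- The simple root `α₂ = (0,1,−1,0)` of `D₄`. -/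
def d4a2 : ↥(DnS 4) := ⟨![0, 1, -1, 0], by show (2:ℤ) ∣ ∑ i, ![0,1,-1,0] i; decide⟩

/-- The simple root `α₃ = (0,0,1,−1)` of `D₄`. -/
def d4a3 : ↥(DnS 4) := ⟨![0, 0, 1, -1], by show (2:ℤ) ∣ ∑ i, ![0,0,1,-1] i; decide⟩

/-- The simple root `α₄ = (0,0,1,1)` of `D₄`. -/
def d4a4 : ↥(DnS 4) := ⟨![0, 0, 1, 1], by show (2:ℤ) ∣ ∑ i, ![0,0,1,1] i; decide⟩

/-- The reflection `r_a : x ↦ x − ⟨x,a⟩a` of `ℤ⁴`. -/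
def reflV (a x : Fin 4 → ℤ) : Fin 4 → ℤ := x - dotF x a • a

/-- Twice the matrix of the fixed-point-free automorphism `φ` of `D₄`:
`φ(e₁) = ½(−1,1,1,1)`, `φ(e₂) = ½(−1,−1,1,−1)`, `φ(e₃) = ½(−1,−1,−1,1)`,
`φ(e₄) = ½(−1,1,−1,−1)`. -/
def phiM : Matrix (Fin 4) (Fin 4) ℤ :=
  !![-1,-1,-1,-1; 1,-1,-1,1; 1,1,-1,-1; 1,-1,1,-1]

/-- The subgroup `P = ⟨W(D₄), w⟩` of `Aut D₄`. -/
def PGrp (w : AddAut ↥(DnS 4)) : Subgroup (AddAut ↥(DnS 4)) :=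
  WeylGrp (rootF (DnS 4)) ⊔ Subgroup.zpowers w

/-- The conjugacy class of `x` under a subgroup `H`, i.e. `Con(x)_H`. -/
def conjIn (H : Subgroup (AddAut ↥(DnS 4))) (x : AddAut ↥(DnS 4)) :
    Set (AddAut ↥(DnS 4)) :=
  {g | ∃ p ∈ H, g = p⁻¹ * x * p}

/-- `ψ` is characterized as `r_{α₁} r_{α₂}`. -/
def IsPsi (ψ : ↥(IsometryGrp (rootF (DnS 4)))) : Prop :=
  ∀ x : ↥(DnS 4),
    ((ψ : AddAut ↥(DnS 4)) x).val = reflV d4a1.val (reflV d4a2.val x.val)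

/-- `ω` is characterized as the isometry with `ω(α₁) = α₃`, `ω(α₃) = α₄`,
`ω(α₄) = α₁`, `ω(α₂) = α₂`. -/
def IsOmega (ω : ↥(IsometryGrp (rootF (DnS 4)))) : Prop :=
  (ω : AddAut ↥(DnS 4)) d4a1 = d4a3 ∧ (ω : AddAut ↥(DnS 4)) d4a3 = d4a4 ∧
    (ω : AddAut ↥(DnS 4)) d4a4 = d4a1 ∧ (ω : AddAut ↥(DnS 4)) d4a2 = d4a2

/-- `φ` is characterized by `2 φ(x) = phiM ⬝ x`. -/
def IsPhi (φ : ↥(IsometryGrp (rootF (DnS 4)))) : Prop :=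
  ∀ x : ↥(DnS 4),
    (2 : ℤ) • ((φ : AddAut ↥(DnS 4)) x).val = phiM.mulVec x.val


section Aux

/-- Twice the matrix of `ω`. -/
def omM : Matrix (Fin 4) (Fin 4) ℤ :=
  !![1,1,1,1; 1,1,-1,-1; 1,-1,1,-1; -1,1,1,-1]

/-- Matrix of the reflection in `(1,1,0,0)`. -/
def r1M : Matrix (Fin 4) (Fin 4) ℤ := !![0,-1,0,0; -1,0,0,0; 0,0,1,0; 0,0,0,1]

/-- Matrix of the reflection in `(1,0,1,0)`. -/
def r2M : Matrix (Fin 4) (Fin 4) ℤ := !![0,0,-1,0; 0,1,0,0; -1,0,0,0; 0,0,0,1]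

/-- `f` acts on `D₄` as `(1/m) A`. -/
def actsAs (m : ℤ) (f : AddAut ↥(DnS 4)) (A : Matrix (Fin 4) (Fin 4) ℤ) : Prop :=
  ∀ x : ↥(DnS 4), m • (f x).val = A.mulVec x.val

lemma actsAs.mul {m n k : ℤ} {f g : AddAut ↥(DnS 4)} {A B : Matrix (Fin 4) (Fin 4) ℤ}
    (hf : actsAs m f A) (hg : actsAs n g B) (hk : k = m * n) :
    actsAs k (f * g) (A * B) := by
  intro x
  have h1 : (f * g) x = f (g x) := rfl
  rw [hk, h1, mul_comm m n, mul_smul, hf (g x), ← Matrix.mulVec_smul, hg x,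
    Matrix.mulVec_mulVec]

lemma actsAs.ext {m : ℤ} (hm : m ≠ 0) {f g : AddAut ↥(DnS 4)}
    {A : Matrix (Fin 4) (Fin 4) ℤ} (hf : actsAs m f A) (hg : actsAs m g A) : f = g := by
  ext x
  have h := (hf x).trans (hg x).symm
  have := smul_right_injective (Fin 4 → ℤ) hm h
  exact congrFun (Subtype.ext this ▸ rfl) _

lemma dotF_sub {x y a : Fin 4 → ℤ} : dotF (x - y) a = dotF x a - dotF y a := by
  simp only [dotF, Pi.sub_apply, sub_mul, Finset.sum_sub_distrib]

lemma dotF_add {x y a : Fin 4 → ℤ} : dotF (x + y) a = dotF x a + dotF y a := by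
  simp only [dotF, Pi.add_apply, add_mul, Finset.sum_add_distrib]

lemma dotF_smul {c : ℤ} {x a : Fin 4 → ℤ} : dotF (c • x) a = c * dotF x a := by
  simp only [dotF, Pi.smul_apply, smul_eq_mul, Finset.mul_sum, mul_assoc]

lemma reflV_mem {a : Fin 4 → ℤ} (haD : a ∈ DnS 4) {x : Fin 4 → ℤ} (hx : x ∈ DnS 4) :
    reflV a x ∈ DnS 4 := by
  have : ∑ i, (reflV a x) i = (∑ i, x i) - dotF x a * (∑ i, a i) := by
    simp only [reflV, Pi.sub_apply, Pi.smul_apply, smul_eq_mul, Finset.sum_sub_distrib,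
      Finset.mul_sum]
  show (2:ℤ) ∣ _
  rw [this]
  exact dvd_sub hx (Dvd.dvd.mul_left haD _)

lemma reflV_invol {a : Fin 4 → ℤ} (ha : dotF a a = 2) (x : Fin 4 → ℤ) :
    reflV a (reflV a x) = x := by
  unfold reflV
  rw [dotF_sub, dotF_smul, ha]
  have : dotF x a - dotF x a * 2 = -(dotF x a) := by ring
  rw [this, neg_smul, sub_neg_eq_add, sub_add_cancel]

/-- The reflection in a norm-2 vector of `D₄`, as an automorphism of `D₄`. -/
def reflAut (a : Fin 4 → ℤ) (ha : dotF a a = 2) (haD : a ∈ DnS 4) : AddAut ↥(DnS 4) where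
  toFun x := ⟨reflV a x.val, reflV_mem haD x.2⟩
  invFun x := ⟨reflV a x.val, reflV_mem haD x.2⟩
  left_inv x := Subtype.ext (reflV_invol ha x.val)
  right_inv x := Subtype.ext (reflV_invol ha x.val)
  map_add' x y := by
    apply Subtype.ext
    show reflV a (x.val + y.val) = reflV a x.val + reflV a y.val
    unfold reflV
    rw [dotF_add, add_smul]
    abel

lemma reflAut_mem {a : Fin 4 → ℤ} (ha : dotF a a = 2) (haD : a ∈ DnS 4) :
    reflAut a ha haD ∈ WeylGrp (rootF (DnS 4)) := by
  apply Subgroup.subset_closure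
  refine ⟨⟨a, haD⟩, ha, fun x => ?_⟩
  apply Subtype.ext
  show reflV a x.val = (x - rootF (DnS 4) x ⟨a, haD⟩ • (⟨a, haD⟩ : ↥(DnS 4))).val
  rfl

lemma reflAut_sq {a : Fin 4 → ℤ} (ha : dotF a a = 2) (haD : a ∈ DnS 4) :
    reflAut a ha haD * reflAut a ha haD = 1 := by
  ext x
  exact congrFun (congrArg Subtype.val (Subtype.ext (reflV_invol ha x.val) :
    (reflAut a ha haD) ((reflAut a ha haD) x) = x)) _

lemma reflAut_inv {a : Fin 4 → ℤ} (ha : dotF a a = 2) (haD : a ∈ DnS 4) :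
    (reflAut a ha haD)⁻¹ = reflAut a ha haD :=
  inv_eq_of_mul_eq_one_right (reflAut_sq ha haD)

lemma dns_mem_iff (x : Fin 4 → ℤ) : x ∈ DnS 4 ↔ (2:ℤ) ∣ ∑ i, x i := Iff.rfl

lemma decomp (x : ↥(DnS 4)) (t : ℤ)
    (ht : x.val 0 + x.val 1 + x.val 2 + x.val 3 = 2 * t) :
    x = x.val 0 • d4a1 + (x.val 0 + x.val 1) • d4a2 + (t - x.val 3) • d4a3 + t • d4a4 := by
  apply Subtype.ext
  have hv : (x.val 0 • d4a1 + (x.val 0 + x.val 1) • d4a2 + (t - x.val 3) • d4a3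
      + t • d4a4).val = x.val 0 • d4a1.val + (x.val 0 + x.val 1) • d4a2.val
      + (t - x.val 3) • d4a3.val + t • d4a4.val := rfl
  rw [hv]
  funext i
  fin_cases i <;>
    simp [d4a1, d4a2, d4a3, d4a4, Matrix.cons_val_zero, Matrix.cons_val_one] <;>
    linarith

lemma omega_acts (ω : ↥(IsometryGrp (rootF (DnS 4)))) (hω : IsOmega ω) :
    actsAs 2 (ω : AddAut ↥(DnS 4)) omM := by
  intro x
  obtain ⟨t, ht⟩ := x.2
  rw [Fin.sum_univ_four] at ht
  obtain ⟨h1, h3, h4, h2⟩ := hω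
  have hx := decomp x t ht
  set f := (ω : AddAut ↥(DnS 4)) with hf
  have : f x = x.val 0 • d4a3 + (x.val 0 + x.val 1) • d4a2 + (t - x.val 3) • d4a4
      + t • d4a1 := by
    conv_lhs => rw [hx]
    simp only [map_add, map_zsmul, h1, h2, h3, h4]
  rw [this]
  have hv : (x.val 0 • d4a3 + (x.val 0 + x.val 1) • d4a2 + (t - x.val 3) • d4a4
      + t • d4a1).val = x.val 0 • d4a3.val + (x.val 0 + x.val 1) • d4a2.val
      + (t - x.val 3) • d4a4.val + t • d4a1.val := rfl
  rw [hv]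
  funext i
  fin_cases i <;>
    simp [d4a1, d4a2, d4a3, d4a4, omM, Matrix.mulVec, dotProduct,
      Fin.sum_univ_four] <;>
    linarith

lemma b1_norm : dotF ![1,1,0,0] ![1,1,0,0] = 2 := by decide
lemma b1_mem : ![1,1,0,0] ∈ DnS 4 := by show (2:ℤ) ∣ ∑ i, ![(1:ℤ),1,0,0] i; decide
lemma b2_norm : dotF ![1,0,1,0] ![1,0,1,0] = 2 := by decide
lemma b2_mem : ![1,0,1,0] ∈ DnS 4 := by show (2:ℤ) ∣ ∑ i, ![(1:ℤ),0,1,0] i; decide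

lemma r1_acts : actsAs 1 (reflAut ![1,1,0,0] b1_norm b1_mem) r1M := by
  intro x
  have : ((reflAut ![1,1,0,0] b1_norm b1_mem) x).val = reflV ![1,1,0,0] x.val := rfl
  rw [one_smul, this]
  funext i
  fin_cases i <;>
    simp [reflV, dotF, r1M, Matrix.mulVec, dotProduct, Fin.sum_univ_four] <;>
    ring

lemma r2_acts : actsAs 1 (reflAut ![1,0,1,0] b2_norm b2_mem) r2M := by
  intro x
  have : ((reflAut ![1,0,1,0] b2_norm b2_mem) x).val = reflV ![1,0,1,0] x.val := rfl
  rw [one_smul, this]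
  funext i
  fin_cases i <;>
    simp [reflV, dotF, r2M, Matrix.mulVec, dotProduct, Fin.sum_univ_four] <;>
    ring

/-- Conjugation by an isometry preserves the Weyl group. -/
lemma weyl_conj (g : AddAut ↥(DnS 4))
    (hg : ∀ x y, rootF (DnS 4) (g x) (g y) = rootF (DnS 4) x y)
    {w : AddAut ↥(DnS 4)} (hw : w ∈ WeylGrp (rootF (DnS 4))) :
    g * w * g⁻¹ ∈ WeylGrp (rootF (DnS 4)) := by
  unfold WeylGrp at hw ⊢
  induction hw using Subgroup.closure_induction with
  | mem w hw =>
    obtain ⟨α, hα2, hαf⟩ := hw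
    apply Subgroup.subset_closure
    refine ⟨g α, by rw [hg]; exact hα2, fun x => ?_⟩
    have hginv : g (g⁻¹ x) = x := by
      show (g * g⁻¹) x = x
      rw [mul_inv_cancel]; rfl
    have hstep : (g * w * g⁻¹) x = g (w (g⁻¹ x)) := rfl
    rw [hstep, hαf (g⁻¹ x), map_sub, map_zsmul, hginv]
    congr 2
    rw [← hg (g⁻¹ x) α, hginv]
  | one => simpa using one_mem _
  | mul a b _ _ ha hb =>
    have : g * (a * b) * g⁻¹ = (g * a * g⁻¹) * (g * b * g⁻¹) := by group
    rw [this]; exact mul_mem ha hb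
  | inv a _ ha =>
    have : g * a⁻¹ * g⁻¹ = (g * a * g⁻¹)⁻¹ := by group
    rw [this]; exact inv_mem ha

lemma conj_zpow' {G : Type*} [Group G] (a b : G) (n : ℤ) :
    (a * b * a⁻¹) ^ n = a * b ^ n * a⁻¹ := conj_zpow

/-- Core group-theoretic argument. -/
lemma mainAux {G : Type*} [Group G] (W : Subgroup G) (g εc : G)
    (hgW : ∀ w ∈ W, g * w * g⁻¹ ∈ W) (hgW' : ∀ w ∈ W, g⁻¹ * w * g ∈ W)
    (u : G) (hu : u ∈ W) (hkey : g⁻¹ * εc * g = u⁻¹ * εc * u) :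
    ∀ p ∈ W ⊔ Subgroup.zpowers g, ∃ y ∈ W, p⁻¹ * εc * p = y⁻¹ * εc * y := by
  set S : Set G := {s | ∃ y ∈ W, s = y⁻¹ * εc * y} with hS
  have hεcS : εc ∈ S := ⟨1, one_mem W, by group⟩
  let T : Subgroup G :=
    { carrier := {p | ∀ s ∈ S, p⁻¹ * s * p ∈ S ∧ p * s * p⁻¹ ∈ S}
      one_mem' := by
        intro s hs
        simp only [inv_one, one_mul, mul_one]
        exact ⟨hs, hs⟩
      mul_mem' := by
        intro p q hp hq s hs
        constructor
        · have h1 : (p * q)⁻¹ * s * (p * q) = q⁻¹ * (p⁻¹ * s * p) * q := by group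
          rw [h1]; exact (hq _ ((hp s hs).1)).1
        · have h1 : (p * q) * s * (p * q)⁻¹ = p * (q * s * q⁻¹) * p⁻¹ := by group
          rw [h1]; exact (hp _ ((hq s hs).2)).2
      inv_mem' := by
        intro p hp s hs
        constructor
        · have h1 : p⁻¹⁻¹ * s * p⁻¹ = p * s * p⁻¹ := by group
          rw [h1]; exact (hp s hs).2
        · have h1 : p⁻¹ * s * p⁻¹⁻¹ = p⁻¹ * s * p := by group
          rw [h1]; exact (hp s hs).1 }
  have hWT : W ≤ T := by
    intro w hw s hs
    obtain ⟨y, hy, rfl⟩ := hs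
    constructor
    · exact ⟨y * w, mul_mem hy hw, by group⟩
    · exact ⟨y * w⁻¹, mul_mem hy (inv_mem hw), by group⟩
  have hgT : g ∈ T := by
    intro s hs
    obtain ⟨y, hy, rfl⟩ := hs
    constructor
    · refine ⟨u * (g⁻¹ * y * g), mul_mem hu (hgW' y hy), ?_⟩
      have h1 : g⁻¹ * (y⁻¹ * εc * y) * g
          = (g⁻¹ * y⁻¹ * g) * (g⁻¹ * εc * g) * (g⁻¹ * y * g) := by group
      rw [h1, hkey]; group
    · refine ⟨(g * u⁻¹ * g⁻¹) * (g * y * g⁻¹),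
        mul_mem (hgW u⁻¹ (inv_mem hu)) (hgW y hy), ?_⟩
      have h2 : g * εc * g⁻¹ = (g * u⁻¹ * g⁻¹)⁻¹ * εc * (g * u⁻¹ * g⁻¹) := by
        have h3 : (g * u⁻¹ * g⁻¹)⁻¹ * εc * (g * u⁻¹ * g⁻¹)
            = g * u * (g⁻¹ * εc * g) * u⁻¹ * g⁻¹ := by group
        rw [h3, hkey]; group
      have h1 : g * (y⁻¹ * εc * y) * g⁻¹
          = (g * y * g⁻¹)⁻¹ * (g * εc * g⁻¹) * (g * y * g⁻¹) := by group
      rw [h1, h2]; group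
  have hPT : W ⊔ Subgroup.zpowers g ≤ T :=
    sup_le hWT (Subgroup.zpowers_le.mpr hgT)
  intro p hp
  obtain ⟨y, hy, hval⟩ := (hPT hp εc hεcS).1
  exact ⟨y, hy, hval⟩

end Aux

/-- Lemma 3.2(2): for `ε ∈ {ω, φ}` and `c ∈ {1, −1}`,
`Con(ε^c)_P = { y⁻¹ ε^c y : y ∈ W(D₄) }`, where `P = ⟨W(D₄), ω⟩`. -/
theorem stmt11 (ω φ : ↥(IsometryGrp (rootF (DnS 4))))
    (hω : IsOmega ω) (hφ : IsPhi φ)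
    (ε : AddAut ↥(DnS 4)) (hε : ε = (ω : AddAut ↥(DnS 4)) ∨ ε = (φ : AddAut ↥(DnS 4)))
    (c : ℤ) (hc : c = 1 ∨ c = -1) :
    conjIn (PGrp (ω : AddAut ↥(DnS 4))) (ε ^ c)
      = {g | ∃ y ∈ WeylGrp (rootF (DnS 4)), g = y⁻¹ * ε ^ c * y} := by
  have hωiso := ω.2
  have hωinv : ∀ x y, rootF (DnS 4) (((ω : AddAut ↥(DnS 4)))⁻¹ x) ((↑ω : AddAut ↥(DnS 4))⁻¹ y)
      = rootF (DnS 4) x y := by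
    have : ((ω : AddAut ↥(DnS 4)))⁻¹ = ((ω⁻¹ : ↥(IsometryGrp (rootF (DnS 4)))) :
        AddAut ↥(DnS 4)) := rfl
    rw [this]
    exact (ω⁻¹).2
  -- the key conjugation fact at the level of ε
  have hkey : ∃ u ∈ WeylGrp (rootF (DnS 4)),
      (↑ω : AddAut ↥(DnS 4))⁻¹ * ε * ↑ω = u⁻¹ * ε * u := by
    rcases hε with rfl | rfl
    · exact ⟨1, one_mem _, by group⟩
    · -- ε = φ : use u = r₁ r₂ with r₁, r₂ the reflections in (1,1,0,0), (1,0,1,0)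
      set r1 := reflAut ![1,1,0,0] b1_norm b1_mem with hr1def
      set r2 := reflAut ![1,0,1,0] b2_norm b2_mem with hr2def
      refine ⟨r1 * r2, mul_mem (reflAut_mem _ _) (reflAut_mem _ _), ?_⟩
      have hφa : actsAs 2 (↑φ : AddAut ↥(DnS 4)) phiM := hφ
      have hωa : actsAs 2 (↑ω : AddAut ↥(DnS 4)) omM := omega_acts ω hω
      have hu2 : actsAs 1 (r2 * r1) (r2M * r1M) := r2_acts.mul r1_acts (by norm_num)
      have hga : actsAs 2 ((↑ω : AddAut ↥(DnS 4)) * (r2 * r1)) (omM * (r2M * r1M)) :=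
        hωa.mul hu2 (by norm_num)
      have hcomm : (↑φ : AddAut ↥(DnS 4)) * ((↑ω : AddAut ↥(DnS 4)) * (r2 * r1))
          = ((↑ω : AddAut ↥(DnS 4)) * (r2 * r1)) * ↑φ := by
        apply actsAs.ext (m := 4) (by norm_num)
          (A := phiM * (omM * (r2M * r1M)))
        · exact hφa.mul hga (show (4:ℤ) = 2 * 2 by norm_num)
        · have h5 := hga.mul hφa (show (4:ℤ) = 2 * 2 by norm_num)
          have hM : omM * (r2M * r1M) * phiM = phiM * (omM * (r2M * r1M)) := by decide
          rwa [hM] at h5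
      have huinv : (r1 * r2)⁻¹ = r2 * r1 := by
        rw [mul_inv_rev, hr1def, hr2def, reflAut_inv, reflAut_inv]
      have e1 : r1 * r1 = 1 := reflAut_sq b1_norm b1_mem
      have e2 : r2 * r2 = 1 := reflAut_sq b2_norm b2_mem
      rw [huinv]
      have step1 : (↑ω : AddAut ↥(DnS 4))⁻¹ * ↑φ * ↑ω
          = (↑ω : AddAut ↥(DnS 4))⁻¹ * (↑φ * (↑ω * (r2 * r1))) * (r1 * r2) := by
        have h6 : (↑ω : AddAut ↥(DnS 4))⁻¹ * (↑φ * (↑ω * (r2 * r1))) * (r1 * r2)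
            = (↑ω : AddAut ↥(DnS 4))⁻¹ * ↑φ * ↑ω * (r2 * (r1 * r1 * r2)) := by group
        rw [h6, e1, one_mul, e2, mul_one]
      rw [step1, hcomm]
      have h7 : (↑ω : AddAut ↥(DnS 4))⁻¹ * (↑ω * (r2 * r1) * ↑φ) * (r1 * r2)
          = r2 * r1 * ↑φ * (r1 * r2) := by group
      rw [h7]
  obtain ⟨u, hu, hkeyε⟩ := hkey
  -- lift to ε ^ c
  have hkeyc : (↑ω : AddAut ↥(DnS 4))⁻¹ * ε ^ c * ↑ω = u⁻¹ * ε ^ c * u := by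
    have h1 : (↑ω : AddAut ↥(DnS 4))⁻¹ * ε ^ c * ↑ω
        = ((↑ω : AddAut ↥(DnS 4))⁻¹ * ε * ↑ω) ^ c := by
      rw [show ((↑ω : AddAut ↥(DnS 4))⁻¹ * ε * ↑ω)
        = ((↑ω : AddAut ↥(DnS 4))⁻¹ * ε * ((↑ω : AddAut ↥(DnS 4))⁻¹)⁻¹) by rw [inv_inv],
        conj_zpow', inv_inv]
    have h2 : u⁻¹ * ε ^ c * u = (u⁻¹ * ε * u) ^ c := by
      rw [show (u⁻¹ * ε * u) = (u⁻¹ * ε * (u⁻¹)⁻¹) by rw [inv_inv], conj_zpow', inv_inv]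
    rw [h1, h2, hkeyε]
  ext g
  constructor
  · rintro ⟨p, hp, rfl⟩
    have hW : ∀ w ∈ WeylGrp (rootF (DnS 4)),
        (↑ω : AddAut ↥(DnS 4)) * w * (↑ω : AddAut ↥(DnS 4))⁻¹ ∈ WeylGrp (rootF (DnS 4)) :=
      fun w hw => weyl_conj _ hωiso hw
    have hW' : ∀ w ∈ WeylGrp (rootF (DnS 4)),
        (↑ω : AddAut ↥(DnS 4))⁻¹ * w * (↑ω : AddAut ↥(DnS 4)) ∈ WeylGrp (rootF (DnS 4)) := by
      intro w hw
      have := weyl_conj ((↑ω : AddAut ↥(DnS 4)))⁻¹ hωinv hw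
      rwa [inv_inv] at this
    obtain ⟨y, hy, hval⟩ := mainAux (WeylGrp (rootF (DnS 4))) (↑ω : AddAut ↥(DnS 4))
      (ε ^ c) hW hW' u hu hkeyc p hp
    exact ⟨y, hy, hval⟩
  · rintro ⟨y, hy, rfl⟩
    exact ⟨y, le_sup_left (α := Subgroup (AddAut ↥(DnS 4))) hy, rfl⟩
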